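/- In the down-up algebra A(α, β) = k⟨x, y⟩/(x²y - βyx² - αxyx, xy² - βy²x - αyxy) with β ≠ 0, the identity x^i y = β λ_{i-1} y x^i + λ_i x y x^{i-1} holds for all i ≥ 1, where λ is the sequence with λ_0 = 0, λ_1 = 1, λ_{r+2} = α λ_{r+1} + β λ_r. -/

import Mathlib

/-- The two defining relations of the graded down-up algebra
`A(α, β) = k⟨x, y⟩ / (x²y - βyx² - αxyx, xy² - βy²x - αyxy)`,
with `x = ι 0` and `y = ι 1` in the free algebra on two generators. -/
inductive DownUpRel (k : Type*) [Field k] (α β : k) :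
    FreeAlgebra k (Fin 2) → FreeAlgebra k (Fin 2) → Prop
  | rel1 : DownUpRel k α β
      ((FreeAlgebra.ι k (0 : Fin 2)) ^ 2 * FreeAlgebra.ι k (1 : Fin 2))
      (β • (FreeAlgebra.ι k (1 : Fin 2) * (FreeAlgebra.ι k (0 : Fin 2)) ^ 2) +
        α • (FreeAlgebra.ι k (0 : Fin 2) * FreeAlgebra.ι k (1 : Fin 2) *
          FreeAlgebra.ι k (0 : Fin 2)))
  | rel2 : DownUpRel k α β
      (FreeAlgebra.ι k (0 : Fin 2) * (FreeAlgebra.ι k (1 : Fin 2)) ^ 2)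
      (β • ((FreeAlgebra.ι k (1 : Fin 2)) ^ 2 * FreeAlgebra.ι k (0 : Fin 2)) +
        α • (FreeAlgebra.ι k (1 : Fin 2) * FreeAlgebra.ι k (0 : Fin 2) *
          FreeAlgebra.ι k (1 : Fin 2)))

/-- The down-up algebra `A(α, β)`. -/
def DownUpAlgebra (k : Type*) [Field k] (α β : k) :=
  RingQuot (DownUpRel k α β)

noncomputable instance (k : Type*) [Field k] (α β : k) : Ring (DownUpAlgebra k α β) :=
  inferInstanceAs (Ring (RingQuot (DownUpRel k α β)))

noncomputable instance (k : Type*) [Field k] (α β : k) :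
    Algebra k (DownUpAlgebra k α β) :=
  inferInstanceAs (Algebra k (RingQuot (DownUpRel k α β)))

/-- The image of the generator `x` in the down-up algebra. -/
noncomputable def DownUpAlgebra.x (k : Type*) [Field k] (α β : k) : DownUpAlgebra k α β :=
  RingQuot.mkAlgHom k (DownUpRel k α β) (FreeAlgebra.ι k (0 : Fin 2))

/-- The image of the generator `y` in the down-up algebra. -/
noncomputable def DownUpAlgebra.y (k : Type*) [Field k] (α β : k) : DownUpAlgebra k α β :=
  RingQuot.mkAlgHom k (DownUpRel k α β) (FreeAlgebra.ι k (1 : Fin 2))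

/-- In the down-up algebra `A(α, β)` with `β ≠ 0`, the identity
`x^i y = β λ_{i-1} y x^i + λ_i x y x^{i-1}` holds for all `i ≥ 1`, where `λ` is the
sequence with `λ₀ = 0`, `λ₁ = 1`, `λ_{r+2} = α λ_{r+1} + β λ_r`. -/
theorem downUp_xi_y (k : Type*) [Field k] (α β : k) (hβ : β ≠ 0)
    (l : ℕ → k) (h0 : l 0 = 0) (h1 : l 1 = 1)
    (hrec : ∀ r : ℕ, l (r + 2) = α * l (r + 1) + β * l r) :
    ∀ i : ℕ, 1 ≤ i →
      (DownUpAlgebra.x k α β) ^ i * DownUpAlgebra.y k α β =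
        (β * l (i - 1)) • (DownUpAlgebra.y k α β * (DownUpAlgebra.x k α β) ^ i) +
          l i • (DownUpAlgebra.x k α β * DownUpAlgebra.y k α β *
            (DownUpAlgebra.x k α β) ^ (i - 1)) := by

  set X := DownUpAlgebra.x k α β with hX
  set Y := DownUpAlgebra.y k α β with hY
  have key : X ^ 2 * Y = β • (Y * X ^ 2) + α • (X * Y * X) := by
    have h := RingQuot.mkAlgHom_rel k (DownUpRel.rel1 (k := k) (α := α) (β := β))
    simp [hX, hY, DownUpAlgebra.x, DownUpAlgebra.y, map_mul, map_pow, map_add,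
      map_smul] at h ⊢
    exact h
  intro i hi
  induction i, hi using Nat.le_induction with
  | base => simp [h0, h1]
  | succ n hn ih =>
      have hsub : n + 1 - 1 = n := rfl
      obtain ⟨m, rfl⟩ := Nat.exists_eq_add_of_le' hn
      calc X ^ (m + 1 + 1) * Y = X * (X ^ (m + 1) * Y) := by
              rw [pow_succ', mul_assoc]
        _ = X * ((β * l (m + 1 - 1)) • (Y * X ^ (m + 1))
              + l (m + 1) • (X * Y * X ^ (m + 1 - 1))) := by rw [ih]
        _ = (β * l m) • (X * Y * X ^ (m + 1)) + l (m + 1) • (X ^ 2 * Y * X ^ m) := by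
              rw [mul_add, mul_smul_comm, mul_smul_comm]
              simp only [Nat.add_sub_cancel, mul_assoc, pow_two]
        _ = (β * l m) • (X * Y * X ^ (m + 1))
              + l (m + 1) • ((β • (Y * X ^ 2) + α • (X * Y * X)) * X ^ m) := by rw [key]
        _ = (β * l (m + 1 + 1 - 1)) • (Y * X ^ (m + 1 + 1))
              + l (m + 1 + 1) • (X * Y * X ^ (m + 1 + 1 - 1)) := by
              have hpA : (Y * X ^ 2) * X ^ m = Y * X ^ (m + 1 + 1) := by
                rw [mul_assoc, ← pow_add]; ring_nf
              have hpB : (X * Y * X) * X ^ m = X * Y * X ^ (m + 1) := by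
                rw [mul_assoc, ← pow_succ']
              rw [add_mul, smul_mul_assoc, smul_mul_assoc, hpA, hpB,
                Nat.add_sub_cancel, show m + 1 + 1 = m + 2 from rfl, hrec m]
              module
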